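/- Let K > 2 and let (ξ^{(n)}_{i,j})_{1≤i,j≤n}, n ≥ 2, be arrays of i.i.d. Bernoulli(p_n) random variables with p_n ∈ (0,1). If ∑_{n≥2} n·exp( − 3(K−2)²/(6+2(K−2)) · p_n n ) < ∞, then almost surely there exists n_0 such that for all n ≥ n_0 and all i ∈ {1,...,n}, both ∑_{j=1}^n |ξ^{(n)}_{i,j}/p_n − 1| ≤ Kn and ∑_{j=1}^n |ξ^{(n)}_{j,i}/p_n − 1| ≤ Kn. -/

import Mathlib

open MeasureTheory ProbabilityTheory Real

lemma nonneg_of_deriv (f f' : ℝ → ℝ) (h0 : f 0 = 0)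
    (hd : ∀ y ∈ Set.Ici (0:ℝ), HasDerivAt f (f' y) y)
    (h' : ∀ y ∈ Set.Ioi (0:ℝ), 0 ≤ f' y) {x : ℝ} (hx : 0 ≤ x) : 0 ≤ f x := by
  have hmono : MonotoneOn f (Set.Ici 0) := by
    refine monotoneOn_of_deriv_nonneg (convex_Ici 0)
      (fun y hy => ((hd y hy).continuousAt).continuousWithinAt) ?_ ?_
    · intro y hy
      rw [interior_Ici] at hy
      exact ((hd y (Set.Ioi_subset_Ici_self hy)).differentiableAt).differentiableWithinAt
    · intro y hy
      rw [interior_Ici] at hy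
      rw [(hd y (Set.Ioi_subset_Ici_self hy)).deriv]
      exact h' y hy
  have := hmono (Set.self_mem_Ici) hx hx
  rwa [h0] at this

lemma key_ineq {x : ℝ} (hx : 0 ≤ x) :
    3 * x ^ 2 ≤ (6 + 2 * x) * ((1 + x) * Real.log (1 + x) - x) := by
  have hlog_lb : ∀ y : ℝ, 0 ≤ y → 1 - (1 + y)⁻¹ ≤ Real.log (1 + y) := fun y hy =>
    Real.one_sub_inv_le_log_of_pos (by linarith)
  have hd1 : ∀ y : ℝ, 0 ≤ y →
      HasDerivAt (fun z : ℝ => (8 + 4 * z) * Real.log (1 + z) - 8 * z)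
        (4 * Real.log (1 + y) + (8 + 4 * y) * (1 / (1 + y)) - 8) y := by
    intro y hy
    have h1 : HasDerivAt (fun z : ℝ => 1 + z) 1 y := by
      simpa using (hasDerivAt_id y).const_add (1:ℝ)
    have hlog : HasDerivAt (fun z : ℝ => Real.log (1 + z)) (1 / (1 + y)) y := by
      simpa using h1.log (by positivity)
    have hA : HasDerivAt (fun z : ℝ => 8 + 4 * z) 4 y := by
      simpa using ((hasDerivAt_id y).const_mul (4:ℝ)).const_add (8:ℝ)
    have := (hA.mul hlog).sub ((hasDerivAt_id y).const_mul (8:ℝ))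
    exact this.congr_deriv (by ring)
  have hf1 : ∀ y : ℝ, 0 ≤ y → 0 ≤ (8 + 4 * y) * Real.log (1 + y) - 8 * y := by
    intro y hy
    refine nonneg_of_deriv _ _ (by simp) hd1 ?_ hy
    intro z hz
    have hz' : (0:ℝ) < z := hz
    have h1z : (0:ℝ) < 1 + z := by linarith
    have hll := hlog_lb z hz'.le
    have hfrac : (8 + 4 * z) * (1 / (1 + z)) = 4 + 4 * (1 + z)⁻¹ := by
      field_simp; ring
    rw [hfrac]
    nlinarith [hll]
  -- main level
  have hd0 : ∀ y : ℝ, 0 ≤ y →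
      HasDerivAt (fun z : ℝ => (6 + 2 * z) * ((1 + z) * Real.log (1 + z) - z) - 3 * z ^ 2)
        (2 * ((1 + y) * Real.log (1 + y) - y) +
          (6 + 2 * y) * (Real.log (1 + y) + (1 + y) * (1 / (1 + y)) - 1) - 3 * (2 * y)) y := by
    intro y hy
    have h1 : HasDerivAt (fun z : ℝ => 1 + z) 1 y := by
      simpa using (hasDerivAt_id y).const_add (1:ℝ)
    have hlog : HasDerivAt (fun z : ℝ => Real.log (1 + z)) (1 / (1 + y)) y := by
      simpa using h1.log (by positivity)
    have hh : HasDerivAt (fun z : ℝ => (1 + z) * Real.log (1 + z) - z)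
        (1 * Real.log (1 + y) + (1 + y) * (1 / (1 + y)) - 1) y :=
      (h1.mul hlog).sub (hasDerivAt_id y)
    have hA : HasDerivAt (fun z : ℝ => 6 + 2 * z) 2 y := by
      simpa using ((hasDerivAt_id y).const_mul (2:ℝ)).const_add (6:ℝ)
    have hsq : HasDerivAt (fun z : ℝ => 3 * z ^ 2) (3 * (2 * y)) y := by
      simpa using ((hasDerivAt_pow 2 y).const_mul (3:ℝ))
    have := (hA.mul hh).sub hsq
    exact this.congr_deriv (by ring)
  have h0 : 0 ≤ (6 + 2 * x) * ((1 + x) * Real.log (1 + x) - x) - 3 * x ^ 2 := by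
    refine nonneg_of_deriv _ _ (by simp) hd0 ?_ hx
    intro z hz
    have hz' : (0:ℝ) < z := hz
    have h1z : (0:ℝ) < 1 + z := by linarith
    have hone : (1 + z) * (1 / (1 + z)) = 1 := by field_simp
    rw [hone]
    have := hf1 z hz'.le
    nlinarith [this]
  linarith

-- mgf of a Bernoulli(p) {0,1}-valued variable
lemma bernoulli_mgf {Ω : Type*} [MeasurableSpace Ω] (μ : Measure Ω) [IsProbabilityMeasure μ]
    {X : Ω → ℝ} (hmeas : Measurable X) (hval : ∀ ω, X ω = 0 ∨ X ω = 1)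
    {p : ℝ} (hp : 0 ≤ p) (hber : μ {ω | X ω = 1} = ENNReal.ofReal p) (t : ℝ) :
    mgf X μ t = 1 + p * (Real.exp t - 1) := by
  have hXind : X = Set.indicator {ω | X ω = 1} (fun _ => (1:ℝ)) := by
    ext ω
    rcases hval ω with h | h <;> simp [Set.indicator_apply, h]
  have hAmeas : MeasurableSet {ω | X ω = 1} := hmeas (measurableSet_singleton 1)
  have hintX : ∫ ω, X ω ∂μ = p := by
    rw [hXind, integral_indicator_const _ hAmeas, measureReal_def, hber]
    simp [ENNReal.toReal_ofReal hp]
  have hIX : Integrable X μ := by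
    rw [hXind]
    exact (integrable_const (1:ℝ)).indicator hAmeas
  have hpt : (fun ω => Real.exp (t * X ω)) = fun ω => 1 + (Real.exp t - 1) * X ω := by
    ext ω
    rcases hval ω with h | h <;> simp [h]
  rw [mgf, hpt]
  rw [integral_add (integrable_const 1) (hIX.const_mul _)]
  rw [MeasureTheory.integral_const_mul, hintX]
  simp
  ring

lemma chernoff_bound {Ω : Type*} [MeasurableSpace Ω] (μ : Measure Ω) [IsProbabilityMeasure μ]
    {ι : Type*} {X : ι → Ω → ℝ} (hmeas : ∀ i, Measurable (X i))
    (hind : iIndepFun X μ)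
    (hval : ∀ i ω, X i ω = 0 ∨ X i ω = 1)
    {p : ℝ} (hp : p ∈ Set.Ioo (0:ℝ) 1)
    (hber : ∀ i, μ {ω | X i ω = 1} = ENNReal.ofReal p)
    (s : Finset ι) {K : ℝ} (hK : 2 < K) :
    μ {ω | (K - 1) * p * s.card ≤ ∑ i ∈ s, X i ω} ≤
      ENNReal.ofReal (Real.exp (-(3 * (K - 2) ^ 2 / (6 + 2 * (K - 2))) * (p * s.card))) := by
  set l : ℝ := K - 2 with hl
  have hl0 : 0 < l := by simp [hl]; linarith
  set t : ℝ := Real.log (1 + l) with htdef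
  have h1l : (0:ℝ) < 1 + l := by linarith
  have ht0 : 0 ≤ t := Real.log_nonneg (by linarith)
  have hexpt : Real.exp t = 1 + l := Real.exp_log h1l
  set S : Ω → ℝ := fun ω => ∑ i ∈ s, X i ω with hSdef
  have hSsum : S = ∑ i ∈ s, X i := by
    ext ω; simp [hSdef]
  have hSmeas : Measurable S := by
    apply Finset.measurable_sum
    exact fun i _ => hmeas i
  have hSbound : ∀ ω, S ω ≤ s.card := by
    intro ω
    calc S ω ≤ ∑ i ∈ s, 1 := by
          apply Finset.sum_le_sum
          intro i _
          rcases hval i ω with h | h <;> simp [h]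
      _ = s.card := by simp
  have hint : Integrable (fun ω => Real.exp (t * S ω)) μ := by
    refine Integrable.mono' (integrable_const (Real.exp (t * s.card)))
      ((hSmeas.const_mul t).exp).aestronglyMeasurable ?_
    filter_upwards with ω
    rw [Real.norm_eq_abs, abs_of_pos (Real.exp_pos _)]
    exact Real.exp_le_exp.2 (mul_le_mul_of_nonneg_left (hSbound ω) ht0)
  have hcher := measure_ge_le_exp_mul_mgf (X := S) (μ := μ) (t := t)
    ((K - 1) * p * s.card) ht0 hint
  have hmgf : mgf S μ t = ∏ i ∈ s, mgf (X i) μ t := by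
    rw [hSsum]
    exact hind.mgf_sum hmeas s
  have hmgfi : ∀ i ∈ s, mgf (X i) μ t = 1 + p * l := by
    intro i _
    rw [bernoulli_mgf μ (hmeas i) (hval i) hp.1.le (hber i) t, hexpt]
    ring
  have hprod : ∏ i ∈ s, mgf (X i) μ t ≤ Real.exp (s.card * (p * l)) := by
    calc ∏ i ∈ s, mgf (X i) μ t = (1 + p * l) ^ s.card := by
          rw [Finset.prod_congr rfl hmgfi, Finset.prod_const]
      _ ≤ (Real.exp (p * l)) ^ s.card := by
          apply pow_le_pow_left₀ (by nlinarith [hp.1, mul_nonneg hp.1.le hl0.le])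
          linarith [Real.add_one_le_exp (p * l)]
      _ = Real.exp (s.card * (p * l)) := by
          rw [← Real.exp_nat_mul]
  -- exponent bound
  have hkey := key_ineq hl0.le
  have hexpo : -t * ((K - 1) * p * s.card) + s.card * (p * l) ≤
      -(3 * (K - 2) ^ 2 / (6 + 2 * (K - 2))) * (p * s.card) := by
    have h62 : (0:ℝ) < 6 + 2 * l := by linarith
    have hkey' : 3 * l ^ 2 / (6 + 2 * l) ≤ (1 + l) * t - l := by
      rw [div_le_iff₀ h62]
      calc 3 * l ^ 2 ≤ (6 + 2 * l) * ((1 + l) * Real.log (1 + l) - l) := hkey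
        _ = ((1 + l) * t - l) * (6 + 2 * l) := by rw [htdef]; ring
    have hpc : (0:ℝ) ≤ p * s.card := mul_nonneg hp.1.le (Nat.cast_nonneg _)
    have hK1 : K - 1 = 1 + l := by rw [hl]; ring
    calc -t * ((K - 1) * p * s.card) + s.card * (p * l)
        = (p * s.card) * (l - (1 + l) * t) := by rw [hK1]; ring
      _ ≤ (p * s.card) * (-(3 * l ^ 2 / (6 + 2 * l))) := by
          apply mul_le_mul_of_nonneg_left _ hpc
          linarith
      _ = -(3 * (K - 2) ^ 2 / (6 + 2 * (K - 2))) * (p * s.card) := by rw [← hl]; ring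
  have hfinal : (μ {ω | (K - 1) * p * s.card ≤ S ω}).toReal ≤
      Real.exp (-(3 * (K - 2) ^ 2 / (6 + 2 * (K - 2))) * (p * s.card)) := by
    calc (μ {ω | (K - 1) * p * s.card ≤ S ω}).toReal
        ≤ Real.exp (-t * ((K - 1) * p * s.card)) * mgf S μ t := hcher
      _ ≤ Real.exp (-t * ((K - 1) * p * s.card)) * Real.exp (s.card * (p * l)) := by
          rw [hmgf]
          exact mul_le_mul_of_nonneg_left hprod (Real.exp_pos _).le
      _ = Real.exp (-t * ((K - 1) * p * s.card) + s.card * (p * l)) := by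
          rw [← Real.exp_add]
      _ ≤ _ := Real.exp_le_exp.2 hexpo
  calc μ {ω | (K - 1) * p * s.card ≤ ∑ i ∈ s, X i ω}
      = ENNReal.ofReal (μ {ω | (K - 1) * p * s.card ≤ S ω}).toReal := by
        rw [ENNReal.ofReal_toReal (measure_ne_top _ _)]
    _ ≤ _ := ENNReal.ofReal_le_ofReal hfinal

lemma tail_bound {Ω : Type*} [MeasurableSpace Ω] (μ : Measure Ω) [IsProbabilityMeasure μ]
    {ι : Type*} {X : ι → Ω → ℝ} (hmeas : ∀ i, Measurable (X i))
    (hind : iIndepFun X μ)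
    (hval : ∀ i ω, X i ω = 0 ∨ X i ω = 1)
    {p : ℝ} (hp : p ∈ Set.Ioo (0:ℝ) 1)
    (hber : ∀ i, μ {ω | X i ω = 1} = ENNReal.ofReal p)
    {n : ℕ} (e : Fin n ↪ ι) {K : ℝ} (hK : 2 < K) :
    μ {ω | (K - 1) * p * n ≤ ∑ j, X (e j) ω} ≤
      ENNReal.ofReal (Real.exp (-(3 * (K - 2) ^ 2 / (6 + 2 * (K - 2))) * (p * n))) := by
  have h := chernoff_bound μ hmeas hind hval hp hber (Finset.univ.map e) hK
  have hcard : ((Finset.univ.map e).card : ℝ) = n := by simp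
  rw [hcard] at h
  have hset : {ω | (K - 1) * p * n ≤ ∑ i ∈ Finset.univ.map e, X i ω}
      = {ω | (K - 1) * p * n ≤ ∑ j, X (e j) ω} := by
    ext ω; simp [Finset.sum_map]
  rwa [hset] at h

lemma absrow_bound {n : ℕ} {p K : ℝ} (hp : p ∈ Set.Ioo (0:ℝ) 1) (hK : 2 < K)
    (f : Fin n → ℝ) (hf : ∀ j, f j = 0 ∨ f j = 1)
    (hS : ∑ j, f j < (K - 1) * p * n) :
    ∑ j, |f j / p - 1| ≤ K * n := by
  have hp0 := hp.1
  have hfnn : ∀ j, 0 ≤ f j := fun j => by rcases hf j with h | h <;> simp [h]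
  have h1 : ∀ j, |f j / p - 1| ≤ f j / p + 1 := by
    intro j
    have : 0 ≤ f j / p := div_nonneg (hfnn j) hp0.le
    rw [abs_le]; constructor <;> linarith
  calc ∑ j, |f j / p - 1| ≤ ∑ j, (f j / p + 1) := Finset.sum_le_sum fun j _ => h1 j
    _ = (∑ j, f j) / p + n := by
        rw [Finset.sum_add_distrib, ← Finset.sum_div]; simp
    _ ≤ (K - 1) * n + n := by
        have : (∑ j, f j) / p ≤ (K - 1) * n := by
          rw [div_le_iff₀ hp0]
          calc ∑ j, f j ≤ (K - 1) * p * n := hS.le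
            _ = (K - 1) * n * p := by ring
        linarith
    _ = K * n := by ring
/-- Borel–Cantelli control of the maximal row/column dilution of Erdős–Rényi arrays:
if `∑_n n·exp(−3(K−2)²/(6+2(K−2)) p_n n) < ∞` then, almost surely, eventually all rows
and columns satisfy `∑_j |ξ^{(n)}_{i,j}/p_n − 1| ≤ Kn`. -/
theorem stmt_4 {Ω : Type*} [MeasurableSpace Ω] (μ : Measure Ω) [IsProbabilityMeasure μ]
    (K : ℝ) (hK : 2 < K) (p : ℕ → ℝ) (hp : ∀ n, p n ∈ Set.Ioo (0 : ℝ) 1)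
    (ξ : (n : ℕ) → Fin n → Fin n → Ω → ℝ)
    (hmeas : ∀ n i j, Measurable (ξ n i j))
    (hindep : ∀ n, 2 ≤ n →
      iIndepFun
        (fun (ij : Fin n × Fin n) ω => ξ n ij.1 ij.2 ω) μ)
    (hval : ∀ n i j ω, ξ n i j ω = 0 ∨ ξ n i j ω = 1)
    (hber : ∀ n, 2 ≤ n → ∀ (i j : Fin n),
      μ {ω | ξ n i j ω = 1} = ENNReal.ofReal (p n))
    (hsum : Summable (fun n : ℕ =>
      (n : ℝ) * Real.exp (-(3 * (K - 2) ^ 2 / (6 + 2 * (K - 2))) * (p n * n)))) :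
    ∀ᵐ ω ∂μ, ∃ n₀ : ℕ, ∀ n, n₀ ≤ n → ∀ i : Fin n,
      (∑ j, |ξ n i j ω / p n - 1|) ≤ K * n ∧
      (∑ j, |ξ n j i ω / p n - 1|) ≤ K * n := by
  set B : ℕ → ℝ := fun n =>
    Real.exp (-(3 * (K - 2) ^ 2 / (6 + 2 * (K - 2))) * (p n * n)) with hBdef
  set E : ℕ → Set Ω := fun n => ⋃ i : Fin n,
    ({ω | (K - 1) * p n * (n : ℝ) ≤ ∑ j, ξ n i j ω} ∪
     {ω | (K - 1) * p n * (n : ℝ) ≤ ∑ j, ξ n j i ω}) with hEdef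
  have hBnn : ∀ n, 0 ≤ B n := fun n => (Real.exp_pos _).le
  -- measure bound for n ≥ 2
  have hEbound : ∀ n, 2 ≤ n → μ (E n) ≤ ENNReal.ofReal ((n : ℝ) * (2 * B n)) := by
    intro n hn
    have hrow : ∀ i : Fin n,
        μ {ω | (K - 1) * p n * (n : ℝ) ≤ ∑ j, ξ n i j ω} ≤ ENNReal.ofReal (B n) := by
      intro i
      have := tail_bound μ (X := fun ij : Fin n × Fin n => fun ω => ξ n ij.1 ij.2 ω)
        (fun ij => hmeas n ij.1 ij.2) (hindep n hn) (fun ij ω => hval n ij.1 ij.2 ω)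
        (hp n) (fun ij => hber n hn ij.1 ij.2)
        ⟨fun j => (i, j), fun a b h => by simpa using congrArg Prod.snd h⟩ hK
      exact this
    have hcol : ∀ i : Fin n,
        μ {ω | (K - 1) * p n * (n : ℝ) ≤ ∑ j, ξ n j i ω} ≤ ENNReal.ofReal (B n) := by
      intro i
      have := tail_bound μ (X := fun ij : Fin n × Fin n => fun ω => ξ n ij.1 ij.2 ω)
        (fun ij => hmeas n ij.1 ij.2) (hindep n hn) (fun ij ω => hval n ij.1 ij.2 ω)
        (hp n) (fun ij => hber n hn ij.1 ij.2)
        ⟨fun j => (j, i), fun a b h => by simpa using congrArg Prod.fst h⟩ hK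
      exact this
    calc μ (E n) ≤ ∑ i : Fin n, μ
          ({ω | (K - 1) * p n * (n : ℝ) ≤ ∑ j, ξ n i j ω} ∪
           {ω | (K - 1) * p n * (n : ℝ) ≤ ∑ j, ξ n j i ω}) := measure_iUnion_fintype_le _ _
      _ ≤ ∑ _i : Fin n, (ENNReal.ofReal (B n) + ENNReal.ofReal (B n)) := by
          refine Finset.sum_le_sum fun i _ => ?_
          exact (measure_union_le _ _).trans (add_le_add (hrow i) (hcol i))
      _ = (n : ENNReal) * (ENNReal.ofReal (B n) + ENNReal.ofReal (B n)) := by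
          simp [Finset.sum_const, mul_comm, mul_add]
      _ = ENNReal.ofReal ((n : ℝ) * (2 * B n)) := by
          rw [← ENNReal.ofReal_add (hBnn n) (hBnn n), ← ENNReal.ofReal_natCast,
            ← ENNReal.ofReal_mul (Nat.cast_nonneg n)]
          congr 1
          ring
  -- summability
  have htsum : (∑' n, μ (E n)) ≠ ⊤ := by
    have hle : ∀ n, μ (E n) ≤ ENNReal.ofReal ((n : ℝ) * (2 * B n)) +
        (if n < 2 then 1 else 0) := by
      intro n
      by_cases h : n < 2
      · simp only [h, if_pos]
        exact le_add_left prob_le_one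
      · rw [if_neg h]
        simpa using hEbound n (not_lt.1 h)
    refine ne_top_of_le_ne_top ?_ (ENNReal.tsum_le_tsum hle)
    rw [ENNReal.tsum_add]
    apply ENNReal.add_ne_top.2
    constructor
    · have hsum2 : Summable (fun n : ℕ => (n : ℝ) * (2 * B n)) := by
        have := hsum.mul_left 2
        exact this.congr fun n => by simp only [hBdef]; ring
      have hnn : ∀ n : ℕ, 0 ≤ (n : ℝ) * (2 * B n) := fun n => by positivity
      rw [← ENNReal.ofReal_tsum_of_nonneg hnn hsum2]
      exact ENNReal.ofReal_ne_top
    · have heq : (∑' n : ℕ, (if n < 2 then (1:ENNReal) else 0)) =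
          ∑ n ∈ Finset.range 2, (if n < 2 then (1:ENNReal) else 0) := by
        apply tsum_eq_sum
        intro n hn
        rw [if_neg (by simpa using hn)]
      rw [heq]
      simp
  -- Borel–Cantelli
  have hae := MeasureTheory.ae_eventually_notMem htsum
  filter_upwards [hae] with ω hω
  rw [Filter.eventually_atTop] at hω
  obtain ⟨n₀, hn₀⟩ := hω
  refine ⟨n₀, fun n hn i => ?_⟩
  have hnot := hn₀ n hn
  simp only [hEdef, Set.mem_iUnion, Set.mem_union, Set.mem_setOf_eq, not_exists, not_or,
    not_le] at hnot
  obtain ⟨hrow, hcol⟩ := hnot i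
  exact ⟨absrow_bound (hp n) hK _ (fun j => hval n i j ω) hrow,
    absrow_bound (hp n) hK _ (fun j => hval n j i ω) hcol⟩
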